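/- Let T satisfy the sectorial-type hypotheses (ray S_ω in the S-resolvent set with ‖Q_s(T)^{-1}‖ ≤ M/|s|², ‖TQ_s(T)^{-1}‖ ≤ M/|s|). Then for all n < k < m ∈ ℕ₀, the space D(Tᵏ) belongs to K_{(k−n)/(m−n)}(D(Tⁿ), D(T^m)); i.e., there exists C_K ≥ 0 such that K(t,x) ≤ C_K·t^{(k−n)/(m−n)}·‖x‖_{D(Tᵏ)} for all t > 0 and x ∈ D(Tᵏ), where K is the K-functional of the couple D(Tⁿ), D(T^m). -/

import Mathlib

noncomputable section

open MulOpposite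

local notation "ℍ" => Quaternion ℝ

/-- The domain `D(Tⁿ)` of the `n`-th power of an operator `T` with domain `D`:
all `x` such that `x, Tx, …, T^{n-1}x ∈ D`. -/
def domN {X : Type*} [AddCommGroup X] [Module ℍᵐᵒᵖ X]
    (T : Module.End ℍᵐᵒᵖ X) (D : Set X) (n : ℕ) : Set X :=
  {x | ∀ j < n, (T ^ j) x ∈ D}

/-- The operator `Q_s(T) = T² − 2 Re(s) T + |s|²` for a quaternion `s`. -/
def Qs {X : Type*} [AddCommGroup X] [Module ℍᵐᵒᵖ X] [Module ℝ X]
    [SMulCommClass ℍᵐᵒᵖ ℝ X] (T : Module.End ℍᵐᵒᵖ X) (s : ℍ) : Module.End ℍᵐᵒᵖ X :=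
  T ^ 2 - (2 * s.re) • T + (‖s‖ ^ 2) • 1

/-- The operator `Q_{t e^{iω}}(T) = T² − 2 t cos(ω) T + t²` associated with the point
`t e^{iω}` of the ray `S_ω` (independent of the imaginary unit `i ∈ 𝕊`). -/
def Qray {X : Type*} [AddCommGroup X] [Module ℍᵐᵒᵖ X] [Module ℝ X]
    [SMulCommClass ℍᵐᵒᵖ ℝ X] (T : Module.End ℍᵐᵒᵖ X) (ω t : ℝ) : Module.End ℍᵐᵒᵖ X :=
  T ^ 2 - (2 * t * Real.cos ω) • T + (t ^ 2) • 1

/-- The `K`-functional of the couple `D(Tⁿ), D(T^m)` (with graph norms). -/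
def Kdom {X : Type*} [NormedAddCommGroup X] [Module ℍᵐᵒᵖ X]
    (T : Module.End ℍᵐᵒᵖ X) (D : Set X) (n m : ℕ) (t : ℝ) (x : X) : ℝ :=
  sInf {r | ∃ a b, x = a + b ∧ a ∈ domN T D n ∧ b ∈ domN T D m ∧
    r = (‖a‖ + ‖(T ^ n) a‖) + t * (‖b‖ + ‖(T ^ m) b‖)}

lemma ratsmul {X : Type*} [AddCommGroup X] [Module ℝ X] [Module ℍᵐᵒᵖ X]
    [SMulCommClass ℍᵐᵒᵖ ℝ X] (q : ℚ) (v : X) :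
    (q:ℝ) • v = (op ((q:ℝ):ℍ)) • v := by
  haveI : SMulCommClass ℝ ℍᵐᵒᵖ X := SMulCommClass.symm ℍᵐᵒᵖ ℝ X
  have hd : ((q.den : ℝ)) ≠ 0 := Nat.cast_ne_zero.mpr q.den_nz
  have key : (q.den:ℝ) • ((q:ℝ) • v) = (q.den:ℝ) • ((op ((q:ℝ):ℍ)) • v) := by
    have h1 : (q.den:ℝ) • ((q:ℝ) • v) = ((q.num:ℝ)) • v := by
      rw [smul_smul]
      congr 1
      rw [Rat.cast_def]
      field_simp
    have h2 : (q.den:ℝ) • ((op ((q:ℝ):ℍ)) • v) = ((q.num:ℝ)) • v := by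
      rw [smul_comm]
      have : (q.den:ℝ) • v = (op ((q.den:ℝ):ℍ)) • v := by
        rw [show ((q.den:ℝ):ℍ) = ((q.den:ℕ):ℍ) by push_cast; ring]
        rw [op_natCast, Nat.cast_smul_eq_nsmul ℍᵐᵒᵖ, Nat.cast_smul_eq_nsmul ℝ]
      rw [this, smul_smul]
      rw [show op ((q:ℝ):ℍ) * op ((q.den:ℝ):ℍ) = op (((q.den:ℝ) * (q:ℝ) : ℝ):ℍ) by
        rw [← op_mul, Quaternion.coe_mul]]
      have hnum : (q.den:ℝ) * (q:ℝ) = ((q.num:ℤ):ℝ) := by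
        rw [Rat.cast_def]; field_simp
      rw [hnum]
      rw [show (((q.num:ℤ):ℝ):ℍ) = ((q.num:ℤ):ℍ) by push_cast; ring]
      rw [op_intCast, Int.cast_smul_eq_zsmul ℍᵐᵒᵖ, Int.cast_smul_eq_zsmul ℝ]
    rw [h1, h2]
  have := congrArg (fun w => ((q.den:ℝ))⁻¹ • w) key
  simpa [inv_smul_smul₀ hd] using this

section domNlem
variable {X : Type*} [AddCommGroup X] [Module ℍᵐᵒᵖ X]
  (T : Module.End ℍᵐᵒᵖ X) (D : Set X)

lemma domN_anti {i j : ℕ} (hij : i ≤ j) : domN T D j ⊆ domN T D i :=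
  fun _ hx l hl => hx l (lt_of_lt_of_le hl hij)

lemma pow_mem_domN {i j : ℕ} {x : X} (hx : x ∈ domN T D (i + j)) :
    (T ^ i) x ∈ domN T D j := by
  intro l hl
  have : (T ^ l) ((T ^ i) x) = (T ^ (l + i)) x := by
    rw [pow_add, Module.End.mul_apply]
  rw [this]
  exact hx _ (by omega)

lemma mem_of_domN {j : ℕ} {x : X} (hx : x ∈ domN T D j) (hj : 0 < j) : x ∈ D := by
  have := hx 0 hj
  rwa [pow_zero, Module.End.one_apply] at this

lemma powcomm (A : Module.End ℍᵐᵒᵖ X)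
    (hc : ∀ z ∈ D, A (T z) = T (A z)) :
    ∀ (i:ℕ) (z:X), z ∈ domN T D i → (T^i) (A z) = A ((T^i) z) := by
  intro i
  induction i with
  | zero => intro z _; simp
  | succ i ih =>
    intro z hz
    have hzD : z ∈ D := mem_of_domN T D hz (Nat.succ_pos i)
    have h1 : (T^(i+1)) (A z) = (T^i) (T (A z)) := by
      rw [pow_succ, Module.End.mul_apply]
    have h2 : (T^(i+1)) z = (T^i) (T z) := by
      rw [pow_succ, Module.End.mul_apply]
    rw [h1, ← hc z hzD, h2]
    exact ih (T z) (by
      intro l hl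
      have : (T ^ l) (T z) = (T ^ (l+1)) z := by
        rw [pow_succ, Module.End.mul_apply]
      rw [this]; exact hz _ (by omega))

end domNlem


set_option maxHeartbeats 4000000 in
/-- `D(Tᵏ) ∈ K_{(k−n)/(m−n)}(D(Tⁿ), D(T^m))`, i.e.
`K(t,x) ≤ C t^{(k−n)/(m−n)} ‖x‖_{D(Tᵏ)}` for all `t > 0`, `x ∈ D(Tᵏ)`. -/
theorem dom_pow_K_intermediate
    {X : Type*} [NormedAddCommGroup X] [NormedSpace ℝ X] [CompleteSpace X]
    [Module ℍᵐᵒᵖ X] [SMulCommClass ℍᵐᵒᵖ ℝ X]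
    -- right Banach space: `‖x·s‖ = ‖x‖·|s|`
    (hnorm : ∀ (x : X) (s : ℍ), ‖(op s) • x‖ = ‖x‖ * ‖s‖)
    -- `T` is a closed right linear operator with domain `D`
    (T : Module.End ℍᵐᵒᵖ X) (D : Submodule ℍᵐᵒᵖ X)
    (hclosed : IsClosed {p : X × X | p.1 ∈ (D : Set X) ∧ T p.1 = p.2})
    -- the ray `S_ω` lies in the S-resolvent set, with pseudo-resolvents `R t = Q_{te^{iω}}(T)⁻¹`
    (ω : ℝ) (hω : ω ∈ Set.Icc (0:ℝ) Real.pi)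
    (M : ℝ) (hM : 0 ≤ M)
    (R : ℝ → Module.End ℍᵐᵒᵖ X)
    (hRcont : ∀ t > 0, Continuous (R t))
    (hRdom : ∀ t > 0, ∀ x : X, R t x ∈ domN T (D : Set X) 2)
    (hQR : ∀ t > 0, ∀ x : X, Qray T ω t (R t x) = x)
    (hRQ : ∀ t > 0, ∀ x ∈ domN T (D : Set X) 2, R t (Qray T ω t x) = x)
    -- the resolvent bounds `‖Q_s⁻¹‖ ≤ M/|s|²` and `‖T Q_s⁻¹‖ ≤ M/|s|` on `S_ω`
    (hR1 : ∀ t > 0, ∀ x : X, ‖R t x‖ ≤ M / t ^ 2 * ‖x‖)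
    (hR2 : ∀ t > 0, ∀ x : X, ‖T (R t x)‖ ≤ M / t * ‖x‖)
    (n k m : ℕ) (hnk : n < k) (hkm : k < m) :
    ∃ C : ℝ, 0 ≤ C ∧ ∀ t > 0, ∀ x ∈ domN T (D : Set X) k,
      Kdom T (D : Set X) n m t x
        ≤ C * t ^ (((k : ℝ) - n) / ((m : ℝ) - n)) * (‖x‖ + ‖(T ^ k) x‖) := by
  -- F1 : real smul closure of D and real linearity of T on D
  have F1 : ∀ (r:ℝ) (y:X), y ∈ D → (r • y ∈ (D:Set X) ∧ T (r • y) = r • T y) := by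
    intro r y hy
    have hsub : ∀ q : ℚ, ((q:ℝ) • y ∈ (D:Set X) ∧ T ((q:ℝ) • y) = (q:ℝ) • T y) := by
      intro q
      rw [ratsmul]
      refine ⟨D.smul_mem _ hy, ?_⟩
      rw [show T ((op ((q:ℝ):ℍ)) • y) = (op ((q:ℝ):ℍ)) • T y from T.map_smul _ y, ← ratsmul]
    set s : Set ℝ := {r | r • y ∈ (D:Set X) ∧ T (r • y) = r • T y} with hs
    have hsc : IsClosed s := by
      have heq : s = (fun r : ℝ => (r • y, r • T y)) ⁻¹'
          {p : X × X | p.1 ∈ (D : Set X) ∧ T p.1 = p.2} := by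
        ext r; exact Iff.rfl
      rw [heq]
      exact hclosed.preimage (by fun_prop)
    have hrange : Set.range ((↑) : ℚ → ℝ) ⊆ s := by rintro _ ⟨q, rfl⟩; exact hsub q
    have hdense : Dense (Set.range ((↑) : ℚ → ℝ)) := Rat.denseRange_cast
    have : (r:ℝ) ∈ closure (Set.range ((↑) : ℚ → ℝ)) := by
      rw [hdense.closure_eq]; trivial
    exact (hsc.closure_subset_iff.mpr hrange) this
  -- smul commutation with powers on domains
  have smulpow : ∀ (r:ℝ) (i:ℕ) (z:X), z ∈ domN T ↑D i → (T^i) (r•z) = r • (T^i) z := by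
    intro r
    have h1 : ∀ v : X, (r • (1:Module.End ℍᵐᵒᵖ X)) v = r • v := by
      intro v; rw [LinearMap.smul_apply, Module.End.one_apply]
    intro i z hz
    have := powcomm T ↑D (r • (1:Module.End ℍᵐᵒᵖ X))
      (fun w hw => by rw [h1, h1, (F1 r w hw).2]) i z hz
    rwa [h1, h1] at this
  have smulmem : ∀ (r:ℝ) (j:ℕ) (z:X), z ∈ domN T ↑D j → r•z ∈ domN T ↑D j := by
    intro r j z hz i hi
    rw [smulpow r i z (domN_anti T ↑D (le_of_lt hi) hz)]
    exact (F1 r _ (hz i hi)).1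
  -- F2 : the basic identity for T²R
  have F2 : ∀ τ, 0 < τ → ∀ z : X,
      T (T (R τ z)) = z + (2*τ*Real.cos ω) • (T (R τ z)) - τ^2 • (R τ z) := by
    intro τ hτ z
    have h := hQR τ hτ z
    rw [Qray] at h
    simp only [LinearMap.add_apply, LinearMap.sub_apply, LinearMap.smul_apply,
      Module.End.one_apply, pow_two, Module.End.mul_apply] at h
    rw [pow_two]
    calc T (T (R τ z))
        = (T (T (R τ z)) - (2*τ*Real.cos ω) • T (R τ z) + (τ*τ) • (R τ z))
            + (2*τ*Real.cos ω) • (T (R τ z)) - (τ*τ) • (R τ z) := by abel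
      _ = z + (2*τ*Real.cos ω) • (T (R τ z)) - (τ*τ) • (R τ z) := by rw [h]
  -- F4 : commutation of R with T on D
  have F4 : ∀ τ, 0 < τ → ∀ z ∈ (D:Set X), T (R τ z) = R τ (T z) := by
    intro τ hτ z hz
    have hRz : R τ z ∈ (D:Set X) := by
      have := hRdom τ hτ z 0 (by norm_num); rwa [pow_zero, Module.End.one_apply] at this
    have hTRz : T (R τ z) ∈ (D:Set X) := by
      have := hRdom τ hτ z 1 (by norm_num); rwa [pow_one] at this
    have h2 : T (R τ z) ∈ domN T ↑D 2 := by
      intro i hi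
      interval_cases i
      · rwa [pow_zero, Module.End.one_apply]
      · rw [pow_one, F2 τ hτ z]
        exact D.sub_mem (D.add_mem hz (F1 _ _ hTRz).1) (F1 _ _ hRz).1
    have hQT : Qray T ω τ (T (R τ z)) = T z := by
      have hxp : ∀ v : X, v ∈ (D:Set X) → T v ∈ (D:Set X) →
          Qray T ω τ (T v) = T (Qray T ω τ v) := by
        intro v hv hTv
        rw [Qray]
        simp only [LinearMap.add_apply, LinearMap.sub_apply, LinearMap.smul_apply,
          Module.End.one_apply, pow_two, Module.End.mul_apply]
        rw [map_add, map_sub, (F1 _ _ hTv).2, (F1 _ _ hv).2]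
      rw [hxp (R τ z) hRz hTRz, hQR τ hτ z]
    rw [← hQT, hRQ τ hτ _ h2]
  -- F5 : commutation of R with T powers
  have F5 : ∀ τ, 0 < τ → ∀ (i:ℕ) (z:X), z ∈ domN T ↑D i →
      (T^i) (R τ z) = R τ ((T^i) z) :=
    fun τ hτ => powcomm T ↑D (R τ) (fun z hz => (F4 τ hτ z hz).symm)
  -- F6 : R maps domN j to domN (j+2)
  have F6 : ∀ τ, 0 < τ → ∀ (j:ℕ) (z:X), z ∈ domN T ↑D j → R τ z ∈ domN T ↑D (j+2) := by
    intro τ hτ j z hz i hi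
    rcases Nat.lt_or_ge i (j+1) with h | h
    · have hij : i ≤ j := by omega
      rw [F5 τ hτ i z (domN_anti T ↑D hij hz)]
      have := hRdom τ hτ ((T^i) z) 0 (by norm_num)
      rwa [pow_zero, Module.End.one_apply] at this
    · have hij : i = j + 1 := by omega
      subst hij
      rw [pow_succ', Module.End.mul_apply, F5 τ hτ j z hz]
      have := hRdom τ hτ ((T^j) z) 1 (by norm_num)
      rwa [pow_one] at this
  -- membership of R z and T R z in D
  have hRD : ∀ τ, 0 < τ → ∀ z : X, R τ z ∈ (D:Set X) := by
    intro τ hτ z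
    have := hRdom τ hτ z 0 (by norm_num); rwa [pow_zero, Module.End.one_apply] at this
  have hTRD : ∀ τ, 0 < τ → ∀ z : X, T (R τ z) ∈ (D:Set X) := by
    intro τ hτ z
    have := hRdom τ hτ z 1 (by norm_num); rwa [pow_one] at this
  -- norm bounds
  have BP1 : ∀ τ, 0 < τ → ∀ z : X, ‖τ^2 • R τ z‖ ≤ M * ‖z‖ := by
    intro τ hτ z
    rw [norm_smul, Real.norm_eq_abs, abs_of_pos (by positivity)]
    have h := hR1 τ hτ z
    have hτ2 : (0:ℝ) < τ^2 := by positivity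
    calc τ^2 * ‖R τ z‖ ≤ τ^2 * (M / τ^2 * ‖z‖) := by
          exact mul_le_mul_of_nonneg_left h (le_of_lt hτ2)
      _ = M * ‖z‖ := by field_simp
  have BP2 : ∀ τ, 0 < τ → ∀ z : X, ‖T (τ^2 • R τ z)‖ ≤ M * τ * ‖z‖ := by
    intro τ hτ z
    rw [(F1 _ _ (hRD τ hτ z)).2, norm_smul, Real.norm_eq_abs, abs_of_pos (by positivity)]
    calc τ^2 * ‖T (R τ z)‖ ≤ τ^2 * (M / τ * ‖z‖) := by
          exact mul_le_mul_of_nonneg_left (hR2 τ hτ z) (by positivity)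
      _ = M * τ * ‖z‖ := by field_simp
  have BTTR : ∀ τ, 0 < τ → ∀ z : X, ‖T (T (R τ z))‖ ≤ (1 + 3*M) * ‖z‖ := by
    intro τ hτ z
    rw [F2 τ hτ z]
    have h1 : ‖(2*τ*Real.cos ω) • T (R τ z)‖ ≤ 2 * M * ‖z‖ := by
      rw [norm_smul, Real.norm_eq_abs]
      have habs : |2*τ*Real.cos ω| ≤ 2*τ := by
        rw [abs_mul]
        calc |2*τ| * |Real.cos ω| ≤ |2*τ| * 1 :=
              mul_le_mul_of_nonneg_left (Real.abs_cos_le_one ω) (abs_nonneg _)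
          _ = 2*τ := by rw [mul_one, abs_of_pos (by positivity)]
      calc |2*τ*Real.cos ω| * ‖T (R τ z)‖ ≤ (2*τ) * (M/τ * ‖z‖) := by
            apply mul_le_mul habs (hR2 τ hτ z) (norm_nonneg _) (by positivity)
        _ = 2 * M * ‖z‖ := by field_simp
    have h2 : ‖τ^2 • R τ z‖ ≤ M * ‖z‖ := BP1 τ hτ z
    calc ‖z + (2*τ*Real.cos ω) • T (R τ z) - τ^2 • R τ z‖
        ≤ ‖z + (2*τ*Real.cos ω) • T (R τ z)‖ + ‖τ^2 • R τ z‖ := norm_sub_le _ _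
      _ ≤ ‖z‖ + ‖(2*τ*Real.cos ω) • T (R τ z)‖ + ‖τ^2 • R τ z‖ := by
          have := norm_add_le z ((2*τ*Real.cos ω) • T (R τ z)); linarith
      _ ≤ (1 + 3*M) * ‖z‖ := by linarith
  have BP3 : ∀ τ, 0 < τ → ∀ z : X, ‖T (T (τ^2 • R τ z))‖ ≤ (1 + 3*M) * τ^2 * ‖z‖ := by
    intro τ hτ z
    have e1 : T (τ^2 • R τ z) = τ^2 • T (R τ z) := (F1 _ _ (hRD τ hτ z)).2
    have e2 : T (τ^2 • T (R τ z)) = τ^2 • T (T (R τ z)) := (F1 _ _ (hTRD τ hτ z)).2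
    rw [e1, e2, norm_smul, Real.norm_eq_abs, abs_of_pos (by positivity)]
    calc τ^2 * ‖T (T (R τ z))‖ ≤ τ^2 * ((1+3*M) * ‖z‖) :=
          mul_le_mul_of_nonneg_left (BTTR τ hτ z) (by positivity)
      _ = (1+3*M) * τ^2 * ‖z‖ := by ring
  have B4 : ∀ τ, 0 < τ → ∀ z ∈ (D:Set X), ‖z - τ^2 • R τ z‖ ≤ 3*M/τ * ‖T z‖ := by
    intro τ hτ z hz
    have e0 : z - τ^2 • R τ z = T (T (R τ z)) - (2*τ*Real.cos ω) • T (R τ z) := by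
      rw [F2 τ hτ z]; abel
    rw [F4 τ hτ z hz] at e0
    have h1 : ‖T (R τ (T z))‖ ≤ M/τ * ‖T z‖ := hR2 τ hτ (T z)
    have h2 : ‖(2*τ*Real.cos ω) • R τ (T z)‖ ≤ 2*M/τ * ‖T z‖ := by
      rw [norm_smul, Real.norm_eq_abs]
      have habs : |2*τ*Real.cos ω| ≤ 2*τ := by
        rw [abs_mul]
        calc |2*τ| * |Real.cos ω| ≤ |2*τ| * 1 :=
              mul_le_mul_of_nonneg_left (Real.abs_cos_le_one ω) (abs_nonneg _)
          _ = 2*τ := by rw [mul_one, abs_of_pos (by positivity)]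
      calc |2*τ*Real.cos ω| * ‖R τ (T z)‖ ≤ (2*τ) * (M/τ^2 * ‖T z‖) := by
            apply mul_le_mul habs (hR1 τ hτ (T z)) (norm_nonneg _) (by positivity)
        _ = 2*M/τ * ‖T z‖ := by field_simp
    calc ‖z - τ^2 • R τ z‖ = ‖T (R τ (T z)) - (2*τ*Real.cos ω) • R τ (T z)‖ := by rw [e0]
      _ ≤ ‖T (R τ (T z))‖ + ‖(2*τ*Real.cos ω) • R τ (T z)‖ := norm_sub_le _ _
      _ ≤ 3*M/τ * ‖T z‖ := by
          have : M/τ * ‖T z‖ + 2*M/τ * ‖T z‖ = 3*M/τ * ‖T z‖ := by ring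
          linarith
  -- the key two-step inequality
  have KS : ∀ τ, 0 < τ → ∀ y ∈ domN T ↑D 2,
      ‖T y‖ ≤ M*τ*‖y‖ + 3*M/τ * ‖T (T y)‖ := by
    intro τ hτ y hy
    have hyD : y ∈ (D:Set X) := mem_of_domN T ↑D hy (by norm_num)
    have hTyD : T y ∈ (D:Set X) := by
      have := hy 1 (by norm_num); rwa [pow_one] at this
    have hsplit : T y = T (τ^2 • R τ y) + (T y - τ^2 • R τ (T y)) := by
      have e : T (τ^2 • R τ y) = τ^2 • R τ (T y) := by
        rw [(F1 _ _ (hRD τ hτ y)).2, F4 τ hτ y hyD]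
      rw [e]; abel
    calc ‖T y‖ = ‖T (τ^2 • R τ y) + (T y - τ^2 • R τ (T y))‖ := by
          conv_lhs => rw [hsplit]
      _ ≤ ‖T (τ^2 • R τ y)‖ + ‖T y - τ^2 • R τ (T y)‖ := norm_add_le _ _
      _ ≤ M*τ*‖y‖ + 3*M/τ * ‖T (T y)‖ := add_le_add (BP2 τ hτ y) (B4 τ hτ (T y) hTyD)
  -- moment inequality
  have MI : ∀ i:ℕ, ∃ C:ℝ, 0 ≤ C ∧ ∀ j ≤ i, ∀ y ∈ domN T ↑D i,
      ‖(T^j) y‖ ≤ C * (‖y‖ + ‖(T^i) y‖) := by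
    intro i
    induction i with
    | zero =>
      refine ⟨1, by norm_num, fun j hj y _ => ?_⟩
      interval_cases j
      have : (0:ℝ) ≤ ‖y‖ := norm_nonneg y
      rw [pow_zero, Module.End.one_apply]; linarith
    | succ i ih =>
      obtain ⟨C, hC0, hC⟩ := ih
      rcases Nat.eq_zero_or_pos i with hi0 | hipos
      · subst hi0
        refine ⟨1, by norm_num, fun j hj y _ => ?_⟩
        have h0 : (0:ℝ) ≤ ‖y‖ := norm_nonneg y
        have h1 : (0:ℝ) ≤ ‖(T^1) y‖ := norm_nonneg _
        interval_cases j
        · rw [pow_zero, Module.End.one_apply]; linarith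
        · linarith
      · obtain ⟨τc, hτc, hhalf⟩ : ∃ τ' : ℝ, 0 < τ' ∧ M*τ'*C ≤ 1/2 := by
          refine ⟨1/(2*(M+1)*(C+1)), by positivity, ?_⟩
          have h1 : (0:ℝ) < 2*(M+1)*(C+1) := by positivity
          rw [mul_one_div, div_mul_eq_mul_div, div_le_iff₀ h1]
          nlinarith [hM, hC0]
        obtain ⟨C', hC'def, hC'0⟩ : ∃ c : ℝ, c = 2*(M*τc*C) + 2*(3*M/τc) ∧ 0 ≤ c := by
          refine ⟨_, rfl, ?_⟩
          have : 0 ≤ 3*M/τc := by positivity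
          have : 0 ≤ M*τc*C := by positivity
          linarith
        have key : ∀ y ∈ domN T ↑D (i+1), ‖(T^i) y‖ ≤ C' * (‖y‖ + ‖(T^(i+1)) y‖) := by
          intro y hy
          obtain ⟨i', rfl⟩ : ∃ i', i = i'+1 := ⟨i-1, by omega⟩
          have hw2 : (T^i') y ∈ domN T ↑D 2 := by
            apply pow_mem_domN T ↑D
            have : i' + 2 = i' + 1 + 1 := by omega
            rw [this]; exact hy
          have hks := KS τc hτc ((T^i') y) hw2
          have e1 : T ((T^i') y) = (T^(i'+1)) y := by
            rw [pow_succ', Module.End.mul_apply]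
          have e2 : T (T ((T^i') y)) = (T^(i'+1+1)) y := by
            rw [pow_succ', Module.End.mul_apply, ← e1]
          rw [e2, e1] at hks
          have hji : ‖(T^i') y‖ ≤ C * (‖y‖ + ‖(T^(i'+1)) y‖) :=
            hC i' (by omega) y (domN_anti T ↑D (by omega) hy)
          have hZ0 : (0:ℝ) ≤ ‖(T^(i'+1)) y‖ := norm_nonneg _
          have hy0 : (0:ℝ) ≤ ‖y‖ := norm_nonneg y
          have hZZ0 : (0:ℝ) ≤ ‖(T^(i'+1+1)) y‖ := norm_nonneg _
          have hMτ : 0 ≤ M*τc := by positivity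
          have step : ‖(T^(i'+1)) y‖ ≤ M*τc*(C*(‖y‖ + ‖(T^(i'+1)) y‖))
              + 3*M/τc * ‖(T^(i'+1+1)) y‖ := by
            calc ‖(T^(i'+1)) y‖ ≤ M*τc*‖(T^i') y‖ + 3*M/τc * ‖(T^(i'+1+1)) y‖ := hks
              _ ≤ M*τc*(C*(‖y‖ + ‖(T^(i'+1)) y‖)) + 3*M/τc * ‖(T^(i'+1+1)) y‖ := by
                  have := mul_le_mul_of_nonneg_left hji hMτ
                  linarith
          have hd : 0 ≤ 3*M/τc := by positivity
          have p1 : 0 ≤ (1/2 - M*τc*C) * ‖(T^(i'+1)) y‖ :=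
            mul_nonneg (by linarith) hZ0
          have hMC : 0 ≤ M*τc*C := mul_nonneg hMτ hC0
          have p3 : 0 ≤ (M*τc*C) * ‖(T^(i'+1+1)) y‖ := mul_nonneg hMC hZZ0
          have p4 : 0 ≤ (3*M/τc) * ‖y‖ := mul_nonneg hd hy0
          rw [hC'def]
          nlinarith [step, p1, p3, p4]
        have hK : (0:ℝ) ≤ C*(1+C') + C' :=
          add_nonneg (mul_nonneg hC0 (by linarith)) hC'0
        refine ⟨C*(1+C') + C' + 1, by linarith, fun j hj y hy => ?_⟩
        have hy0 : (0:ℝ) ≤ ‖y‖ := norm_nonneg y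
        have hZZ0 : (0:ℝ) ≤ ‖(T^(i+1)) y‖ := norm_nonneg _
        rcases Nat.lt_or_ge j (i+1) with hji | hji
        · have h1 : ‖(T^j) y‖ ≤ C * (‖y‖ + ‖(T^i) y‖) :=
            hC j (by omega) y (domN_anti T ↑D (by omega) hy)
          have h2 := key y hy
          have h3 : C * ‖(T^i) y‖ ≤ C * (C' * (‖y‖ + ‖(T^(i+1)) y‖)) :=
            mul_le_mul_of_nonneg_left h2 hC0
          nlinarith [h1, h3, mul_nonneg hC'0 hy0, mul_nonneg hC'0 hZZ0]
        · have : j = i+1 := by omega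
          subst this
          have hA : 0 ≤ (C*(1+C') + C') * ‖(T^(i+1)) y‖ := mul_nonneg hK hZZ0
          have hB : 0 ≤ (C*(1+C') + C' + 1) * ‖y‖ := mul_nonneg (by linarith) hy0
          nlinarith [hA, hB]
  -- domN closure under sub and sums
  have domNsub : ∀ (j:ℕ) (u v : X), u ∈ domN T ↑D j → v ∈ domN T ↑D j →
      u - v ∈ domN T ↑D j := by
    intro j u v hu hv i hi
    rw [map_sub]
    exact D.sub_mem (hu i hi) (hv i hi)
  have memD1 : ∀ z : X, z ∈ domN T ↑D 1 ↔ z ∈ (D:Set X) := by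
    intro z
    constructor
    · intro h; exact mem_of_domN T ↑D h one_pos
    · intro h i hi
      interval_cases i
      rwa [pow_zero, Module.End.one_apply]
  -- the operators E and G
  set E : ℝ → Module.End ℍᵐᵒᵖ X := fun τ => 1 - τ^2 • R τ with hEdef
  have hEapp : ∀ (τ:ℝ) (z:X), E τ z = z - τ^2 • R τ z := by
    intro τ z
    rw [hEdef]
    simp [LinearMap.sub_apply, LinearMap.smul_apply, Module.End.one_apply]
  set N := k - n with hNdef
  have hN1 : 1 ≤ N := by omega
  have hkN : n + N = k := by omega
  set G : ℝ → Module.End ℍᵐᵒᵖ X := fun τ => 1 - (E τ)^N with hGdef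
  have hGapp : ∀ (τ:ℝ) (z:X), G τ z = z - ((E τ)^N) z := by
    intro τ z
    rw [hGdef]
    simp [LinearMap.sub_apply, Module.End.one_apply]
  -- E facts
  have hEmem : ∀ τ, 0<τ → ∀ (j:ℕ) (z:X), z ∈ domN T ↑D j → E τ z ∈ domN T ↑D j := by
    intro τ hτ j z hz
    rw [hEapp]
    exact domNsub j _ _ hz (smulmem _ _ _ (domN_anti T ↑D (by omega) (F6 τ hτ j z hz)))
  have hEcomm : ∀ τ, 0<τ → ∀ z ∈ (D:Set X), E τ (T z) = T (E τ z) := by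
    intro τ hτ z hz
    rw [hEapp, hEapp, map_sub, (F1 _ _ (hRD τ hτ z)).2, F4 τ hτ z hz]
  have hEnorm : ∀ τ, 0<τ → ∀ z : X, ‖E τ z‖ ≤ (1+M)*‖z‖ := by
    intro τ hτ z
    rw [hEapp]
    calc ‖z - τ^2 • R τ z‖ ≤ ‖z‖ + ‖τ^2 • R τ z‖ := norm_sub_le _ _
      _ ≤ (1+M)*‖z‖ := by have := BP1 τ hτ z; linarith
  have hEdecay : ∀ τ, 0<τ → ∀ z ∈ (D:Set X), ‖E τ z‖ ≤ 3*M/τ*‖T z‖ := by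
    intro τ hτ z hz
    rw [hEapp]
    exact B4 τ hτ z hz
  -- powers of E
  have hEpowmem : ∀ τ, 0<τ → ∀ (i j:ℕ) (z:X), z ∈ domN T ↑D j →
      ((E τ)^i) z ∈ domN T ↑D j := by
    intro τ hτ i j
    induction i with
    | zero => intro z hz; rwa [pow_zero, Module.End.one_apply]
    | succ i ih =>
      intro z hz
      rw [pow_succ, Module.End.mul_apply]
      exact ih _ (hEmem τ hτ j z hz)
  have hEpowcomm1 : ∀ τ, 0<τ → ∀ (i:ℕ) (z:X), z ∈ (D:Set X) →
      ((E τ)^i) (T z) = T (((E τ)^i) z) := by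
    intro τ hτ i
    induction i with
    | zero => intro z _; rw [pow_zero, Module.End.one_apply, Module.End.one_apply]
    | succ i ih =>
      intro z hz
      rw [pow_succ, Module.End.mul_apply, Module.End.mul_apply, hEcomm τ hτ z hz]
      exact ih (E τ z) ((memD1 _).mp (hEmem τ hτ 1 z ((memD1 z).mpr hz)))
  have hEpownorm : ∀ τ, 0<τ → ∀ (i:ℕ) (z:X), ‖((E τ)^i) z‖ ≤ (1+M)^i * ‖z‖ := by
    intro τ hτ i
    induction i with
    | zero => intro z; rw [pow_zero, pow_zero, Module.End.one_apply, one_mul]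
    | succ i ih =>
      intro z
      rw [pow_succ, Module.End.mul_apply]
      calc ‖((E τ)^i) (E τ z)‖ ≤ (1+M)^i * ‖E τ z‖ := ih _
        _ ≤ (1+M)^i * ((1+M) * ‖z‖) :=
            mul_le_mul_of_nonneg_left (hEnorm τ hτ z) (by positivity)
        _ = (1+M)^(i+1) * ‖z‖ := by rw [pow_succ]; ring
  have Q4 : ∀ τ, 0<τ → ∀ (i:ℕ) (z:X), z ∈ domN T ↑D i →
      ‖((E τ)^i) z‖ ≤ (3*M/τ)^i * ‖(T^i) z‖ := by
    intro τ hτ i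
    induction i with
    | zero => intro z _; simp
    | succ i ih =>
      intro z hz
      have hEz : E τ z ∈ domN T ↑D i := domN_anti T ↑D (by omega) (hEmem τ hτ (i+1) z hz)
      have hcomm : (T^i) (E τ z) = E τ ((T^i) z) :=
        powcomm T ↑D (E τ) (hEcomm τ hτ) i z (domN_anti T ↑D (by omega) hz)
      have hTiD : (T^i) z ∈ (D:Set X) := hz i (by omega)
      have h30 : (0:ℝ) ≤ 3*M/τ := by positivity
      rw [pow_succ, Module.End.mul_apply]
      calc ‖((E τ)^i) (E τ z)‖ ≤ (3*M/τ)^i * ‖(T^i) (E τ z)‖ := ih _ hEz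
        _ = (3*M/τ)^i * ‖E τ ((T^i) z)‖ := by rw [hcomm]
        _ ≤ (3*M/τ)^i * (3*M/τ * ‖T ((T^i) z)‖) :=
            mul_le_mul_of_nonneg_left (hEdecay τ hτ _ hTiD) (by positivity)
        _ = (3*M/τ)^(i+1) * ‖(T^(i+1)) z‖ := by
            rw [pow_succ (3*M/τ), pow_succ' T, Module.End.mul_apply]; ring
  -- G basic facts
  have hGfact : ∀ τ, 0<τ → (τ^2 • R τ) * (∑ i ∈ Finset.range N, (E τ)^i) = G τ := by
    intro τ hτ
    have h1 : (τ^2 • R τ : Module.End ℍᵐᵒᵖ X) = 1 - E τ := by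
      rw [hEdef]; exact (sub_sub_cancel 1 _).symm
    have h2 := mul_geom_sum (E τ) N
    rw [h1, hGdef]
    calc (1 - E τ) * (∑ i ∈ Finset.range N, (E τ)^i)
        = -((E τ - 1) * (∑ i ∈ Finset.range N, (E τ)^i)) := by rw [← neg_mul, neg_sub]
      _ = -((E τ)^N - 1) := by rw [h2]
      _ = 1 - (E τ)^N := by rw [neg_sub]
  have hGPS : ∀ τ, 0<τ → ∀ z : X, G τ z = τ^2 • R τ ((∑ i ∈ Finset.range N, (E τ)^i) z) := by
    intro τ hτ z
    rw [← hGfact τ hτ, Module.End.mul_apply, LinearMap.smul_apply]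
  have hSmem : ∀ τ, 0<τ → ∀ (j:ℕ) (z:X), z ∈ domN T ↑D j →
      (∑ i ∈ Finset.range N, (E τ)^i) z ∈ domN T ↑D j := by
    intro τ hτ j z hz
    rw [LinearMap.sum_apply]
    intro i hi
    rw [map_sum]
    apply Submodule.sum_mem
    intro c _
    exact hEpowmem τ hτ c j z hz i hi
  have hGmem : ∀ τ, 0<τ → ∀ (j:ℕ) (z:X), z ∈ domN T ↑D j → G τ z ∈ domN T ↑D (j+2) := by
    intro τ hτ j z hz
    rw [hGPS τ hτ]
    exact smulmem _ _ _ (F6 τ hτ j _ (hSmem τ hτ j z hz))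
  have hGcomm : ∀ τ, 0<τ → ∀ z ∈ (D:Set X), G τ (T z) = T (G τ z) := by
    intro τ hτ z hz
    rw [hGapp, hGapp, map_sub, hEpowcomm1 τ hτ N z hz]
  have hGpowmem : ∀ τ, 0<τ → ∀ (l j:ℕ) (z:X), z ∈ domN T ↑D j →
      ((G τ)^l) z ∈ domN T ↑D (j + 2*l) := by
    intro τ hτ l
    induction l with
    | zero => intro j z hz; rw [pow_zero, Module.End.one_apply]; simpa using hz
    | succ l ih =>
      intro j z hz
      rw [pow_succ', Module.End.mul_apply]
      have := hGmem τ hτ (j + 2*l) _ (ih j z hz)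
      have he : j + 2*l + 2 = j + 2*(l+1) := by omega
      rwa [he] at this
  have hGD : ∀ τ, 0<τ → ∀ z : X, ∀ j, z ∈ domN T ↑D j → G τ z ∈ (D:Set X) := by
    intro τ hτ z j hz
    have := hGmem τ hτ 0 z (by intro i hi; omega)
    exact mem_of_domN T ↑D this (by omega)
  have hGpowcomm1 : ∀ τ, 0<τ → ∀ (l:ℕ) (z:X), z ∈ (D:Set X) →
      ((G τ)^l) (T z) = T (((G τ)^l) z) := by
    intro τ hτ l
    induction l with
    | zero => intro z _; rw [pow_zero, Module.End.one_apply, Module.End.one_apply]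
    | succ l ih =>
      intro z hz
      rw [pow_succ, Module.End.mul_apply, Module.End.mul_apply, hGcomm τ hτ z hz]
      exact ih (G τ z) ((memD1 _).mp
        (domN_anti T ↑D (by omega) (hGmem τ hτ 1 z ((memD1 z).mpr hz))))
  set CG : ℝ := 1 + (1+M)^N with hCGdef
  have hCG0 : 0 ≤ CG := by rw [hCGdef]; positivity
  have hGnorm : ∀ τ, 0<τ → ∀ z : X, ‖G τ z‖ ≤ CG*‖z‖ := by
    intro τ hτ z
    rw [hGapp, hCGdef]
    calc ‖z - ((E τ)^N) z‖ ≤ ‖z‖ + ‖((E τ)^N) z‖ := norm_sub_le _ _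
      _ ≤ (1 + (1+M)^N)*‖z‖ := by have := hEpownorm τ hτ N z; linarith
  have hGpownorm : ∀ τ, 0<τ → ∀ (b:ℕ) (z:X), ‖((G τ)^b) z‖ ≤ CG^b * ‖z‖ := by
    intro τ hτ b
    induction b with
    | zero => intro z; rw [pow_zero, pow_zero, Module.End.one_apply, one_mul]
    | succ b ih =>
      intro z
      rw [pow_succ, Module.End.mul_apply]
      calc ‖((G τ)^b) (G τ z)‖ ≤ CG^b * ‖G τ z‖ := ih _
        _ ≤ CG^b * (CG * ‖z‖) := mul_le_mul_of_nonneg_left (hGnorm τ hτ z) (by positivity)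
        _ = CG^(b+1) * ‖z‖ := by rw [pow_succ]; ring
  set CS : ℝ := ∑ i ∈ Finset.range N, (1+M)^i with hCSdef
  have hCS0 : 0 ≤ CS := by
    rw [hCSdef]
    apply Finset.sum_nonneg
    intro i _
    positivity
  have hSnorm : ∀ τ, 0<τ → ∀ z : X, ‖(∑ i ∈ Finset.range N, (E τ)^i) z‖ ≤ CS * ‖z‖ := by
    intro τ hτ z
    rw [LinearMap.sum_apply, hCSdef]
    calc ‖∑ i ∈ Finset.range N, ((E τ)^i) z‖ ≤ ∑ i ∈ Finset.range N, ‖((E τ)^i) z‖ :=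
          norm_sum_le _ _
      _ ≤ ∑ i ∈ Finset.range N, (1+M)^i * ‖z‖ :=
          Finset.sum_le_sum (fun i _ => hEpownorm τ hτ i z)
      _ = (∑ i ∈ Finset.range N, (1+M)^i) * ‖z‖ := by rw [Finset.sum_mul]
  have hGT1 : ∀ τ, 0<τ → ∀ z : X, ‖T (G τ z)‖ ≤ (M*CS)*τ*‖z‖ := by
    intro τ hτ z
    rw [hGPS τ hτ]
    calc ‖T (τ^2 • R τ ((∑ i ∈ Finset.range N, (E τ)^i) z))‖
        ≤ M*τ*‖(∑ i ∈ Finset.range N, (E τ)^i) z‖ := BP2 τ hτ _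
      _ ≤ M*τ*(CS*‖z‖) := by
          apply mul_le_mul_of_nonneg_left (hSnorm τ hτ z) (by positivity)
      _ = (M*CS)*τ*‖z‖ := by ring
  have hGT2 : ∀ τ, 0<τ → ∀ z : X, ‖T (T (G τ z))‖ ≤ ((1+3*M)*CS)*τ^2*‖z‖ := by
    intro τ hτ z
    rw [hGPS τ hτ]
    calc ‖T (T (τ^2 • R τ ((∑ i ∈ Finset.range N, (E τ)^i) z)))‖
        ≤ (1+3*M)*τ^2*‖(∑ i ∈ Finset.range N, (E τ)^i) z‖ := BP3 τ hτ _
      _ ≤ (1+3*M)*τ^2*(CS*‖z‖) := by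
          apply mul_le_mul_of_nonneg_left (hSnorm τ hτ z) (by positivity)
      _ = ((1+3*M)*CS)*τ^2*‖z‖ := by ring
  -- commuting T² through powers of G
  have SQ : ∀ τ, 0<τ → ∀ (a:ℕ) (z:X),
      T (T (((G τ)^(a+1)) z)) = ((G τ)^a) (T (T (G τ z))) := by
    intro τ hτ a
    induction a with
    | zero => intro z; rw [pow_one, pow_zero, Module.End.one_apply]
    | succ a ih =>
      intro z
      have h1 : ((G τ)^(a+1+1)) z = ((G τ)^(a+1)) (G τ z) := by
        rw [pow_succ, Module.End.mul_apply]
      rw [h1, ih (G τ z)]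
      have hw2 : G τ z ∈ domN T ↑D 2 := by
        have := hGmem τ hτ 0 z (by intro i hi; omega)
        simpa using this
      have hcomm2 : T (T (G τ (G τ z))) = G τ (T (T (G τ z))) := by
        have := powcomm T ↑D (G τ) (hGcomm τ hτ) 2 (G τ z) hw2
        simp only [pow_two, Module.End.mul_apply] at this
        exact this
      rw [hcomm2, ← Module.End.mul_apply, ← pow_succ]
  -- the iterated bound for T^j G^a
  have Q5 : ∀ a:ℕ, ∃ CQ:ℝ, 0 ≤ CQ ∧ ∀ τ, 0<τ → ∀ j ≤ 2*a, ∀ z : X,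
      ‖(T^j) (((G τ)^a) z)‖ ≤ CQ * τ^j * ‖z‖ := by
    intro a
    induction a with
    | zero =>
      refine ⟨1, zero_le_one, fun τ hτ j hj z => ?_⟩
      have hj0 : j = 0 := by omega
      subst hj0
      rw [pow_zero, pow_zero, pow_zero, Module.End.one_apply, Module.End.one_apply]
      linarith [norm_nonneg z]
    | succ a ih =>
      obtain ⟨CQ, hCQ0, hCQ⟩ := ih
      refine ⟨CG^(a+1) + (M*CS)*CG^a + CQ*((1+3*M)*CS), by positivity,
        fun τ hτ j hj z => ?_⟩
      have hτj0 : (0:ℝ) ≤ τ^j := by positivity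
      have hz0 : (0:ℝ) ≤ ‖z‖ := norm_nonneg z
      have hfin : ∀ c : ℝ, 0 ≤ c → c ≤ CG^(a+1) + (M*CS)*CG^a + CQ*((1+3*M)*CS) →
          ∀ w : X, ‖w‖ ≤ c * τ^j * ‖z‖ →
          ‖w‖ ≤ (CG^(a+1) + (M*CS)*CG^a + CQ*((1+3*M)*CS)) * τ^j * ‖z‖ := by
        intro c hc0 hc w hw
        calc ‖w‖ ≤ c * τ^j * ‖z‖ := hw
          _ ≤ (CG^(a+1) + (M*CS)*CG^a + CQ*((1+3*M)*CS)) * τ^j * ‖z‖ := by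
            apply mul_le_mul_of_nonneg_right _ hz0
            exact mul_le_mul_of_nonneg_right hc hτj0
      match j, hj with
      | 0, _ =>
        apply hfin (CG^(a+1)) (by positivity)
          (by nlinarith [mul_nonneg (mul_nonneg hM hCS0) (pow_nonneg hCG0 a),
            mul_nonneg hCQ0 (mul_nonneg (by linarith : (0:ℝ) ≤ 1+3*M) hCS0)])
        rw [pow_zero, Module.End.one_apply, pow_zero]
        calc ‖((G τ)^(a+1)) z‖ ≤ CG^(a+1) * ‖z‖ := hGpownorm τ hτ (a+1) z
          _ = CG^(a+1) * 1 * ‖z‖ := by ring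
      | 1, _ =>
        apply hfin ((M*CS)*CG^a)
          (by positivity)
          (by nlinarith [pow_nonneg hCG0 (a+1),
            mul_nonneg hCQ0 (mul_nonneg (by linarith : (0:ℝ) ≤ 1+3*M) hCS0)])
        rw [pow_one, pow_succ', Module.End.mul_apply]
        calc ‖T (G τ (((G τ)^a) z))‖ ≤ (M*CS)*τ*‖((G τ)^a) z‖ := hGT1 τ hτ _
          _ ≤ (M*CS)*τ*(CG^a * ‖z‖) := by
              apply mul_le_mul_of_nonneg_left (hGpownorm τ hτ a z) (by positivity)
          _ = (M*CS)*CG^a * τ^1 * ‖z‖ := by ring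
      | (j'+2), hj =>
        apply hfin (CQ*((1+3*M)*CS))
          (by positivity)
          (by nlinarith [pow_nonneg hCG0 (a+1),
            mul_nonneg (mul_nonneg hM hCS0) (pow_nonneg hCG0 a)])
        have e1 : (T^(j'+2)) (((G τ)^(a+1)) z)
            = (T^j') (((G τ)^a) (T (T (G τ z)))) := by
          rw [show j'+2 = j'+2 from rfl, pow_add, Module.End.mul_apply,
            pow_two, Module.End.mul_apply, SQ τ hτ a z]
        rw [e1]
        calc ‖(T^j') (((G τ)^a) (T (T (G τ z))))‖
            ≤ CQ * τ^j' * ‖T (T (G τ z))‖ := hCQ τ hτ j' (by omega) _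
          _ ≤ CQ * τ^j' * (((1+3*M)*CS)*τ^2*‖z‖) := by
              apply mul_le_mul_of_nonneg_left (hGT2 τ hτ z) (by positivity)
          _ = CQ*((1+3*M)*CS) * τ^(j'+2) * ‖z‖ := by rw [pow_add]; ring
  -- ===================== final assembly =====================
  obtain ⟨CK, hCK0, hCK⟩ := MI k
  obtain ⟨CQ, hCQ0, hCQ⟩ := Q5 m
  set CGS : ℝ := ∑ l ∈ Finset.range m, CG^l with hCGSdef
  have hCGS0 : 0 ≤ CGS := by
    rw [hCGSdef]; exact Finset.sum_nonneg (fun l _ => pow_nonneg hCG0 l)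
  set A3 : ℝ := (3*M)^N with hA3def
  have hA30 : 0 ≤ A3 := by rw [hA3def]; positivity
  set C1 : ℝ := 1 + CK with hC1def
  set C2 : ℝ := A3*CGS*(CK+1) + CG^m + CQ with hC2def
  have hC10 : 0 ≤ C1 := by rw [hC1def]; linarith
  have hC20 : 0 ≤ C2 := by
    rw [hC2def]
    have h1 : 0 ≤ A3*CGS*(CK+1) := by positivity
    have h2 : 0 ≤ CG^m := pow_nonneg hCG0 m
    linarith
  refine ⟨C1 + C2, by linarith, fun t ht x hx => ?_⟩
  set θ : ℝ := ((k:ℝ) - n)/((m:ℝ) - n) with hθdef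
  set Z : ℝ := ‖x‖ + ‖(T^k) x‖ with hZdef
  have hmn : (0:ℝ) < (m:ℝ) - (n:ℝ) := by
    have h1 : n < m := by omega
    have h2 : (n:ℝ) < (m:ℝ) := by exact_mod_cast h1
    linarith
  have hkn : (0:ℝ) ≤ (k:ℝ) - (n:ℝ) := by
    have h1 : (n:ℝ) ≤ (k:ℝ) := by exact_mod_cast (le_of_lt hnk)
    linarith
  have hθ0 : 0 ≤ θ := by rw [hθdef]; positivity
  have hθ1 : θ ≤ 1 := by
    rw [hθdef, div_le_one hmn]
    have h1 : (k:ℝ) ≤ (m:ℝ) := by exact_mod_cast (le_of_lt hkm)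
    linarith
  have htθ0 : (0:ℝ) < t^θ := Real.rpow_pos_of_pos ht θ
  have hxZ : ‖x‖ ≤ Z := by rw [hZdef]; have := norm_nonneg ((T^k) x); linarith
  have hTkZ : ‖(T^k) x‖ ≤ Z := by rw [hZdef]; have := norm_nonneg x; linarith
  have hZ0 : (0:ℝ) ≤ Z := le_trans (norm_nonneg x) hxZ
  -- the K functional is bounded by any decomposition
  have Kle : ∀ (a b : X), x = a + b → a ∈ domN T ↑D n → b ∈ domN T ↑D m →
      Kdom T ↑D n m t x ≤ (‖a‖ + ‖(T^n) a‖) + t*(‖b‖ + ‖(T^m) b‖) := by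
    intro a b hab ha hb
    unfold Kdom
    apply csInf_le
    · refine ⟨0, ?_⟩
      rintro r ⟨a', b', _, _, _, rfl⟩
      positivity
    · exact ⟨a, b, hab, ha, hb, rfl⟩
  rcases le_or_gt 1 t with h1t | h1t
  -- ================= case 1 ≤ t =================
  · have hb0 : (0:X) ∈ domN T ↑D m := by
      intro i _; rw [map_zero]; exact D.zero_mem
    have hxn : x ∈ domN T ↑D n := domN_anti T ↑D (by omega) hx
    have hK := Kle x 0 (add_zero x).symm hxn hb0
    rw [map_zero, norm_zero] at hK
    simp only [add_zero, mul_zero] at hK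
    have hn' : ‖(T^n) x‖ ≤ CK * Z := by
      rw [hZdef]; exact hCK n (by omega) x hx
    have ht1 : (1:ℝ) ≤ t^θ := Real.one_le_rpow h1t hθ0
    have e1 : Kdom T ↑D n m t x ≤ C1 * Z := by
      rw [hC1def]
      have h2 : (0:ℝ) ≤ ‖(T^k) x‖ := norm_nonneg _
      linarith [hn', hxZ]
    calc Kdom T ↑D n m t x ≤ C1 * Z := e1
      _ = C1 * 1 * Z := by ring
      _ ≤ C1 * t^θ * Z :=
          mul_le_mul_of_nonneg_right (mul_le_mul_of_nonneg_left ht1 hC10) hZ0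
      _ ≤ (C1 + C2) * t^θ * Z := by
          apply mul_le_mul_of_nonneg_right _ hZ0
          apply mul_le_mul_of_nonneg_right _ (le_of_lt htθ0)
          linarith
  -- ================= case t < 1 =================
  · set e : ℝ := ((m:ℝ) - n)⁻¹ with hedef
    have he0 : 0 < e := by rw [hedef]; exact inv_pos.mpr hmn
    set τ : ℝ := t^(-e) with hτdef
    have hτpos : 0 < τ := by rw [hτdef]; exact Real.rpow_pos_of_pos ht _
    have hτpow : ∀ j:ℕ, τ^j = t^(-(e*j)) := by
      intro j
      rw [hτdef, ← Real.rpow_natCast (t^(-e)) j, ← Real.rpow_mul (le_of_lt ht), neg_mul]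
    have hθen : e * (N:ℝ) = θ := by
      have hNr : (N:ℝ) = (k:ℝ) - n := by
        rw [hNdef, Nat.cast_sub (le_of_lt hnk)]
      rw [hedef, hNr, hθdef]
      ring
    have hτNinv : (3*M/τ)^N = A3 * t^θ := by
      rw [div_pow, hτpow N, Real.rpow_neg (le_of_lt ht), div_eq_mul_inv, inv_inv, hθen, hA3def]
    have httau : t * τ^(m-k) = t^θ := by
      rw [hτpow (m-k)]
      rw [show t * t^(-(e*((m-k:ℕ):ℝ))) = t^(1 + -(e*((m-k:ℕ):ℝ))) from by
        rw [Real.rpow_add ht, Real.rpow_one]]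
      congr 1
      rw [Nat.cast_sub (le_of_lt hkm), hedef, hθdef]
      field_simp
      ring
    have htle : t ≤ t^θ := by
      calc t = t^(1:ℝ) := (Real.rpow_one t).symm
        _ ≤ t^θ := Real.rpow_le_rpow_of_exponent_ge ht (le_of_lt h1t) hθ1
    -- the decomposition
    set w : X := ∑ l ∈ Finset.range m, ((G τ)^l) x with hwdef
    have tele : ∀ L:ℕ, x = ((E τ)^N) (∑ l ∈ Finset.range L, ((G τ)^l) x) + ((G τ)^L) x := by
      intro L
      induction L with
      | zero => simp
      | succ L ihL =>
        have hstep : ((G τ)^(L+1)) x = ((G τ)^L) x - ((E τ)^N) (((G τ)^L) x) := by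
          rw [pow_succ', Module.End.mul_apply, hGapp]
        rw [Finset.sum_range_succ, map_add, hstep]
        conv_lhs => rw [ihL]
        abel
    have hxab : x = ((E τ)^N) w + ((G τ)^m) x := by rw [hwdef]; exact tele m
    -- memberships
    have hGlx : ∀ l:ℕ, ((G τ)^l) x ∈ domN T ↑D k :=
      fun l => domN_anti T ↑D (by omega) (hGpowmem τ hτpos l k x hx)
    have hwmem : w ∈ domN T ↑D k := by
      intro i hi
      rw [hwdef, map_sum]
      exact Submodule.sum_mem D (fun l _ => hGlx l i hi)
    have ha_mem : ((E τ)^N) w ∈ domN T ↑D n :=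
      domN_anti T ↑D (by omega) (hEpowmem τ hτpos N k w hwmem)
    have hb_mem : ((G τ)^m) x ∈ domN T ↑D m :=
      domN_anti T ↑D (by omega) (hGpowmem τ hτpos m k x hx)
    have hKle := Kle _ _ hxab ha_mem hb_mem
    -- estimate for ‖a‖
    have h3Mτ0 : (0:ℝ) ≤ (3*M/τ)^N := by positivity
    have ha1 : ‖((E τ)^N) w‖ ≤ (3*M/τ)^N * ‖(T^N) w‖ :=
      Q4 τ hτpos N w (domN_anti T ↑D (by omega) hwmem)
    have hTNw : (T^N) w = ∑ l ∈ Finset.range m, ((G τ)^l) ((T^N) x) := by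
      rw [hwdef, map_sum]
      exact Finset.sum_congr rfl (fun l _ =>
        powcomm T ↑D ((G τ)^l) (hGpowcomm1 τ hτpos l) N x (domN_anti T ↑D (by omega) hx))
    have hTNwn : ‖(T^N) w‖ ≤ CGS * ‖(T^N) x‖ := by
      rw [hTNw, hCGSdef]
      calc ‖∑ l ∈ Finset.range m, ((G τ)^l) ((T^N) x)‖
          ≤ ∑ l ∈ Finset.range m, ‖((G τ)^l) ((T^N) x)‖ := norm_sum_le _ _
        _ ≤ ∑ l ∈ Finset.range m, CG^l * ‖(T^N) x‖ :=
            Finset.sum_le_sum (fun l _ => hGpownorm τ hτpos l _)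
        _ = (∑ l ∈ Finset.range m, CG^l) * ‖(T^N) x‖ := by rw [Finset.sum_mul]
    have hTNx : ‖(T^N) x‖ ≤ CK * Z := by rw [hZdef]; exact hCK N (by omega) x hx
    have ea : ‖((E τ)^N) w‖ ≤ A3 * t^θ * (CGS * (CK * Z)) := by
      calc ‖((E τ)^N) w‖ ≤ (3*M/τ)^N * ‖(T^N) w‖ := ha1
        _ ≤ (3*M/τ)^N * (CGS * ‖(T^N) x‖) := mul_le_mul_of_nonneg_left hTNwn h3Mτ0
        _ ≤ (3*M/τ)^N * (CGS * (CK * Z)) := by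
            apply mul_le_mul_of_nonneg_left _ h3Mτ0
            exact mul_le_mul_of_nonneg_left hTNx hCGS0
        _ = A3 * t^θ * (CGS * (CK * Z)) := by rw [hτNinv]
    -- estimate for ‖Tⁿ a‖
    have hTna : (T^n) (((E τ)^N) w) = ((E τ)^N) ((T^n) w) :=
      powcomm T ↑D ((E τ)^N) (hEpowcomm1 τ hτpos N) n w (domN_anti T ↑D (by omega) hwmem)
    have hTnwN : (T^n) w ∈ domN T ↑D N := by
      apply pow_mem_domN T ↑D
      rw [hkN]; exact hwmem
    have ha2 : ‖((E τ)^N) ((T^n) w)‖ ≤ (3*M/τ)^N * ‖(T^N) ((T^n) w)‖ :=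
      Q4 τ hτpos N _ hTnwN
    have hTNTn : (T^N) ((T^n) w) = (T^k) w := by
      rw [← Module.End.mul_apply, ← pow_add, show N+n = k from by omega]
    have hTkweq : (T^k) w = ∑ l ∈ Finset.range m, ((G τ)^l) ((T^k) x) := by
      rw [hwdef, map_sum]
      exact Finset.sum_congr rfl (fun l _ =>
        powcomm T ↑D ((G τ)^l) (hGpowcomm1 τ hτpos l) k x hx)
    have hTkw : ‖(T^k) w‖ ≤ CGS * ‖(T^k) x‖ := by
      rw [hTkweq, hCGSdef]
      calc ‖∑ l ∈ Finset.range m, ((G τ)^l) ((T^k) x)‖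
          ≤ ∑ l ∈ Finset.range m, ‖((G τ)^l) ((T^k) x)‖ := norm_sum_le _ _
        _ ≤ ∑ l ∈ Finset.range m, CG^l * ‖(T^k) x‖ :=
            Finset.sum_le_sum (fun l _ => hGpownorm τ hτpos l _)
        _ = (∑ l ∈ Finset.range m, CG^l) * ‖(T^k) x‖ := by rw [Finset.sum_mul]
    have eb : ‖(T^n) (((E τ)^N) w)‖ ≤ A3 * t^θ * (CGS * ‖(T^k) x‖) := by
      rw [hTna]
      calc ‖((E τ)^N) ((T^n) w)‖ ≤ (3*M/τ)^N * ‖(T^N) ((T^n) w)‖ := ha2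
        _ = (3*M/τ)^N * ‖(T^k) w‖ := by rw [hTNTn]
        _ ≤ (3*M/τ)^N * (CGS * ‖(T^k) x‖) := mul_le_mul_of_nonneg_left hTkw h3Mτ0
        _ = A3 * t^θ * (CGS * ‖(T^k) x‖) := by rw [hτNinv]
    -- estimates for b
    have hb1 : ‖((G τ)^m) x‖ ≤ CG^m * ‖x‖ := hGpownorm τ hτpos m x
    have hpowsplit : ∀ v : X, (T^m) v = (T^(m-k)) ((T^k) v) := by
      intro v
      conv_lhs => rw [show m = (m-k)+k from by omega]
      rw [pow_add, Module.End.mul_apply]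
    have hb2 : ‖(T^m) (((G τ)^m) x)‖ ≤ CQ * τ^(m-k) * ‖(T^k) x‖ := by
      have e1 : (T^k) (((G τ)^m) x) = ((G τ)^m) ((T^k) x) :=
        powcomm T ↑D ((G τ)^m) (hGpowcomm1 τ hτpos m) k x hx
      rw [hpowsplit, e1]
      exact hCQ τ hτpos (m-k) (by omega) _
    -- putting it together
    have hP0 : (0:ℝ) ≤ t^θ := le_of_lt htθ0
    have q1 : t * ‖((G τ)^m) x‖ ≤ t^θ * (CG^m * ‖x‖) := by
      calc t * ‖((G τ)^m) x‖ ≤ t * (CG^m * ‖x‖) :=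
            mul_le_mul_of_nonneg_left hb1 (le_of_lt ht)
        _ ≤ t^θ * (CG^m * ‖x‖) := by
            apply mul_le_mul_of_nonneg_right htle (by positivity)
    have q2 : t * ‖(T^m) (((G τ)^m) x)‖ ≤ t^θ * (CQ * ‖(T^k) x‖) := by
      calc t * ‖(T^m) (((G τ)^m) x)‖ ≤ t * (CQ * τ^(m-k) * ‖(T^k) x‖) :=
            mul_le_mul_of_nonneg_left hb2 (le_of_lt ht)
        _ = (t * τ^(m-k)) * (CQ * ‖(T^k) x‖) := by ring
        _ = t^θ * (CQ * ‖(T^k) x‖) := by rw [httau]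
    have m1 : A3 * t^θ * (CGS * ‖(T^k) x‖) ≤ A3 * t^θ * (CGS * Z) := by
      apply mul_le_mul_of_nonneg_left _ (by positivity)
      exact mul_le_mul_of_nonneg_left hTkZ hCGS0
    have m2 : t^θ * (CG^m * ‖x‖) ≤ t^θ * (CG^m * Z) := by
      apply mul_le_mul_of_nonneg_left _ hP0
      exact mul_le_mul_of_nonneg_left hxZ (pow_nonneg hCG0 m)
    have m3 : t^θ * (CQ * ‖(T^k) x‖) ≤ t^θ * (CQ * Z) := by
      apply mul_le_mul_of_nonneg_left _ hP0
      exact mul_le_mul_of_nonneg_left hTkZ hCQ0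
    have hC1PZ : 0 ≤ C1 * (t^θ * Z) := mul_nonneg hC10 (mul_nonneg hP0 hZ0)
    calc Kdom T ↑D n m t x
        ≤ (‖((E τ)^N) w‖ + ‖(T^n) (((E τ)^N) w)‖)
          + t*(‖((G τ)^m) x‖ + ‖(T^m) (((G τ)^m) x)‖) := hKle
      _ ≤ (A3 * t^θ * (CGS * (CK * Z)) + A3 * t^θ * (CGS * Z))
          + (t^θ * (CG^m * Z) + t^θ * (CQ * Z)) := by
          linarith [hKle, ea, eb, q1, q2, m1, m2, m3]
      _ = (A3*CGS*(CK+1) + CG^m + CQ) * t^θ * Z := by ring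
      _ = C2 * t^θ * Z := by rw [hC2def]
      _ ≤ (C1 + C2) * t^θ * Z := by linarith [hC1PZ]
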